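/- Let χ ∈ L¹_loc(ℝⁿ) be (0,L)ⁿ-periodic with χ ≥ 0 and sup χ ≤ M, and let 0 < ℓ ≤ r. Define χ_ℓ(x) as the average of χ over the ball B_ℓ(x), and ψ(x) := average over B_r(x) of min{(2r/ℓ)ⁿ χ_{2r}, 1}·M where χ_{2r} is the average of χ/M over balls of radius 2r. Then ψ is (0,L)ⁿ-periodic and satisfies: (i) ψ ≥ χ_ℓ; (ii) sup ψ ≤ M; (iii) ∫_{(0,L)ⁿ} ψ ≤ (2r/ℓ)ⁿ ∫_{(0,L)ⁿ} χ. -/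

import Mathlib

open MeasureTheory Set Metric Pointwise

/-- Average of `f` over the ball of radius `s` centered at `x`. -/
noncomputable def ballAvg {n : ℕ} (f : EuclideanSpace ℝ (Fin n) → ℝ) (s : ℝ)
    (x : EuclideanSpace ℝ (Fin n)) : ℝ :=
  ⨍ y in ball x s, f y

/-- The concentration test function built from `χ`. -/
noncomputable def psiFn {n : ℕ} (χ : EuclideanSpace ℝ (Fin n) → ℝ) (ℓ r M : ℝ)
    (x : EuclideanSpace ℝ (Fin n)) : ℝ :=
  ⨍ y in ball x r, (min ((2 * r / ℓ) ^ n * ballAvg (fun z => χ z / M) (2 * r) y) 1) * M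

namespace StmtAux
variable {n : ℕ}

lemma vol_ball_eq (x : EuclideanSpace ℝ (Fin n)) (s : ℝ) :
    volume (ball x s) = volume (ball (0 : EuclideanSpace ℝ (Fin n)) s) := by
  have h : x +ᵥ ball (0 : EuclideanSpace ℝ (Fin n)) s = ball x s := by
    simpa using vadd_ball x (0 : EuclideanSpace ℝ (Fin n)) s
  rw [← h, measure_vadd]

lemma vol_ball_pos {s : ℝ} (hs : 0 < s) (x : EuclideanSpace ℝ (Fin n)) :
    0 < volume (ball x s) := measure_ball_pos _ _ hs

lemma vol_ball_lt_top (x : EuclideanSpace ℝ (Fin n)) (s : ℝ) :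
    volume (ball x s) < ⊤ := measure_ball_lt_top

lemma ballAvg_eq (f : EuclideanSpace ℝ (Fin n) → ℝ) (s : ℝ) (x : EuclideanSpace ℝ (Fin n)) :
    ballAvg f s x
      = (volume (ball (0 : EuclideanSpace ℝ (Fin n)) s)).toReal⁻¹ * ∫ y in ball x s, f y := by
  rw [ballAvg, setAverage_eq, measureReal_def, vol_ball_eq, smul_eq_mul]

lemma integral_ball_shift (f : EuclideanSpace ℝ (Fin n) → ℝ) (s : ℝ)
    (x v : EuclideanSpace ℝ (Fin n)) :
    ∫ y in ball x s, f (y + v) = ∫ y in ball (x + v) s, f y := by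
  have h1 : (fun y : EuclideanSpace ℝ (Fin n) => y + v) ⁻¹' ball (x + v) s = ball x s := by
    ext y; simp [mem_ball, dist_add_right]
  have := (measurePreserving_add_right (volume : Measure (EuclideanSpace ℝ (Fin n)))
    v).setIntegral_preimage_emb (MeasurableEquiv.addRight v).measurableEmbedding f (ball (x + v) s)
  rw [h1] at this
  exact this

lemma ballAvg_add (f : EuclideanSpace ℝ (Fin n) → ℝ) (s : ℝ) (x v : EuclideanSpace ℝ (Fin n)) :
    ballAvg f s (x + v) = ballAvg (fun y => f (y + v)) s x := by
  rw [ballAvg_eq, ballAvg_eq, integral_ball_shift]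

lemma integral_ball_center_shift (f : EuclideanSpace ℝ (Fin n) → ℝ) (s : ℝ)
    (x : EuclideanSpace ℝ (Fin n)) :
    ∫ y in ball x s, f y = ∫ z in ball (0 : EuclideanSpace ℝ (Fin n)) s, f (x + z) := by
  have h := integral_ball_shift (n := n) f s 0 x
  simp only [zero_add] at h
  rw [← h]
  congr 1
  ext z
  simp [add_comm]


lemma aesm_ballAvg {f : EuclideanSpace ℝ (Fin n) → ℝ}
    (hf : AEStronglyMeasurable f volume) (s : ℝ) :
    AEStronglyMeasurable (ballAvg f s) volume := by
  have key : AEStronglyMeasurable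
      (fun x : EuclideanSpace ℝ (Fin n) => ∫ y in ball x s, f y) volume := by
    have h1 : AEStronglyMeasurable
        (fun p : EuclideanSpace ℝ (Fin n) × EuclideanSpace ℝ (Fin n) =>
          ({q : EuclideanSpace ℝ (Fin n) × EuclideanSpace ℝ (Fin n) | dist q.2 q.1 < s}).indicator
            (fun q => f q.2) p) (volume.prod volume) := by
      apply AEStronglyMeasurable.indicator (hf.comp_snd)
      exact measurableSet_lt (measurable_dist.comp measurable_swap) measurable_const
    have h2 := h1.integral_prod_right'
    refine h2.congr (Filter.Eventually.of_forall fun x => ?_)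
    dsimp only
    rw [← integral_indicator measurableSet_ball]
    refine integral_congr_ae (Filter.Eventually.of_forall fun y => ?_)
    by_cases hy : y ∈ ball x s
    · have hm : (x, y) ∈ {q : EuclideanSpace ℝ (Fin n) × EuclideanSpace ℝ (Fin n) |
          dist q.2 q.1 < s} := by simpa [mem_ball] using hy
      simp only [indicator_of_mem hm, indicator_of_mem hy]
    · have hm : (x, y) ∉ {q : EuclideanSpace ℝ (Fin n) × EuclideanSpace ℝ (Fin n) |
          dist q.2 q.1 < s} := by simpa [mem_ball] using hy
      simp only [indicator_of_notMem hm, indicator_of_notMem hy]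
  have : ballAvg f s = fun x =>
      (volume (ball (0 : EuclideanSpace ℝ (Fin n)) s)).toReal⁻¹ * ∫ y in ball x s, f y := by
    funext x
    rw [ballAvg, setAverage_eq, smul_eq_mul]
    congr 2
    have h : x +ᵥ ball (0 : EuclideanSpace ℝ (Fin n)) s = ball x s := by
      simpa using vadd_ball x (0 : EuclideanSpace ℝ (Fin n)) s
    rw [← h, measureReal_def, measure_vadd]
  rw [this]
  exact key.const_mul _

lemma integrableOn_of_bdd {f : EuclideanSpace ℝ (Fin n) → ℝ} {s : Set (EuclideanSpace ℝ (Fin n))}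
    (hs : volume s ≠ ⊤) (hf : AEStronglyMeasurable f volume) {C : ℝ}
    (hC : ∀ y, |f y| ≤ C) : IntegrableOn f s volume :=
  Measure.integrableOn_of_bounded hs hf (Filter.Eventually.of_forall fun y => hC y)

lemma ballAvg_mono {f g : EuclideanSpace ℝ (Fin n) → ℝ} {s : ℝ} (x : EuclideanSpace ℝ (Fin n))
    (hf : IntegrableOn f (ball x s) volume) (hg : IntegrableOn g (ball x s) volume)
    (h : ∀ y ∈ ball x s, f y ≤ g y) : ballAvg f s x ≤ ballAvg g s x := by
  rw [ballAvg, ballAvg, setAverage_eq, setAverage_eq, smul_eq_mul, smul_eq_mul]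
  exact mul_le_mul_of_nonneg_left
    (setIntegral_mono_on hf hg measurableSet_ball h)
    (by positivity)

lemma ballAvg_const {s : ℝ} (hs : 0 < s) (c : ℝ) (x : EuclideanSpace ℝ (Fin n)) :
    ballAvg (fun _ => c) s x = c := by
  rw [ballAvg]
  exact setAverage_const (measure_ball_pos _ _ hs).ne' measure_ball_lt_top.ne c

lemma ballAvg_const_mul (f : EuclideanSpace ℝ (Fin n) → ℝ) (c s : ℝ)
    (x : EuclideanSpace ℝ (Fin n)) :
    ballAvg (fun y => c * f y) s x = c * ballAvg f s x := by
  rw [ballAvg, ballAvg, setAverage_eq, setAverage_eq, smul_eq_mul, smul_eq_mul,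
    integral_const_mul]
  ring

lemma ballAvg_le {f : EuclideanSpace ℝ (Fin n) → ℝ} {s C : ℝ} (hs : 0 < s)
    (x : EuclideanSpace ℝ (Fin n)) (hf : IntegrableOn f (ball x s) volume)
    (h : ∀ y, f y ≤ C) : ballAvg f s x ≤ C := by
  have := ballAvg_mono x hf (integrableOn_const measure_ball_lt_top.ne)
    fun y _ => h y
  rwa [ballAvg_const hs] at this

lemma le_ballAvg {f : EuclideanSpace ℝ (Fin n) → ℝ} {s C : ℝ} (hs : 0 < s)
    (x : EuclideanSpace ℝ (Fin n)) (hf : IntegrableOn f (ball x s) volume)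
    (h : ∀ y, C ≤ f y) : C ≤ ballAvg f s x := by
  have := ballAvg_mono x (integrableOn_const measure_ball_lt_top.ne) hf
    fun y _ => h y
  rwa [ballAvg_const hs] at this


noncomputable def cellBasis (n : ℕ) {L : ℝ} (hL : L ≠ 0) :
    Module.Basis (Fin n) ℝ (EuclideanSpace ℝ (Fin n)) :=
  Module.Basis.ofEquivFun <| (EuclideanSpace.equiv (Fin n) ℝ).toLinearEquiv.trans
    (LinearEquiv.piCongrRight fun _ =>
      LinearEquiv.smulOfNeZero ℝ ℝ L⁻¹ (inv_ne_zero hL))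

lemma cellBasis_repr {L : ℝ} (hL : L ≠ 0) (x : EuclideanSpace ℝ (Fin n)) (i : Fin n) :
    (cellBasis n hL).repr x i = L⁻¹ * x i := by
  simp [cellBasis, Module.Basis.ofEquivFun_repr_apply, LinearEquiv.trans_apply,
    LinearEquiv.piCongrRight_apply, LinearEquiv.smulOfNeZero, LinearEquiv.smulOfUnit,
    smul_eq_mul]

lemma mem_cell_iff {L : ℝ} (hL : 0 < L) (x : EuclideanSpace ℝ (Fin n)) :
    x ∈ ZSpan.fundamentalDomain (cellBasis n hL.ne') ↔ ∀ i, x i ∈ Ico 0 L := by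
  unfold ZSpan.fundamentalDomain
  simp only [mem_setOf_eq, cellBasis_repr hL.ne', mem_Ico]
  have key : ∀ t : ℝ, (0 ≤ L⁻¹ * t ∧ L⁻¹ * t < 1) ↔ (0 ≤ t ∧ t < L) := by
    intro t
    rw [inv_mul_eq_div, div_lt_one hL, le_div_iff₀ hL, zero_mul]
  exact forall_congr' fun i => key (x i)

lemma span_mem {L : ℝ} (hL : L ≠ 0) {v : EuclideanSpace ℝ (Fin n)}
    (hv : v ∈ Submodule.span ℤ (Set.range (cellBasis n hL))) :
    ∃ k : Fin n → ℤ,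
      v = (EuclideanSpace.equiv (Fin n) ℝ).symm (fun i => L * (k i : ℝ)) := by
  rw [Module.Basis.mem_span_iff_repr_mem] at hv
  choose k hk using hv
  refine ⟨k, ?_⟩
  ext i
  have h1 := hk i
  rw [cellBasis_repr hL] at h1
  have h2 : (k i : ℝ) = L⁻¹ * v i := by exact_mod_cast h1
  have hv : v i = L * (k i : ℝ) := by rw [h2]; field_simp
  simpa using hv

lemma invariance {L : ℝ} (hL : L ≠ 0) {f : EuclideanSpace ℝ (Fin n) → ℝ}
    (hper : ∀ (k : Fin n → ℤ) (x : EuclideanSpace ℝ (Fin n)),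
      f (x + (EuclideanSpace.equiv (Fin n) ℝ).symm (fun i => L * (k i : ℝ))) = f x) :
    ∀ (g : Submodule.span ℤ (Set.range (cellBasis n hL)))
      (x : EuclideanSpace ℝ (Fin n)), f ((g : EuclideanSpace ℝ (Fin n)) +ᵥ x) = f x := by
  rintro ⟨v, hv⟩ x
  obtain ⟨k, rfl⟩ := span_mem hL hv
  show f (_ + x) = f x
  rw [add_comm]
  exact hper k x

lemma cell_integral_translate {L : ℝ} (hL : L ≠ 0) {f : EuclideanSpace ℝ (Fin n) → ℝ}
    (hper : ∀ (k : Fin n → ℤ) (x : EuclideanSpace ℝ (Fin n)),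
      f (x + (EuclideanSpace.equiv (Fin n) ℝ).symm (fun i => L * (k i : ℝ))) = f x)
    (z : EuclideanSpace ℝ (Fin n)) :
    ∫ x in ZSpan.fundamentalDomain (cellBasis n hL), f (x + z)
      = ∫ x in ZSpan.fundamentalDomain (cellBasis n hL), f x := by
  have h1 := ZSpan.isAddFundamentalDomain (cellBasis n hL) volume
  have hinv := invariance hL hper
  have hqmp : Measure.QuasiMeasurePreserving (fun x : EuclideanSpace ℝ (Fin n) => x + z)
      volume volume := (measurePreserving_add_right volume z).quasiMeasurePreserving
  have hef : ∀ g : Submodule.span ℤ (Set.range (cellBasis n hL)),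
      Function.Semiconj (fun x : EuclideanSpace ℝ (Fin n) => x + z)
        (fun x => g +ᵥ x) (fun x => g +ᵥ x) := by
    intro g x
    show ((g : EuclideanSpace ℝ (Fin n)) + x) + z = (g : EuclideanSpace ℝ (Fin n)) + (x + z)
    rw [add_assoc]
  have h2 := h1.preimage_of_equiv hqmp Function.bijective_id hef
  have hinv2 : ∀ (g : Submodule.span ℤ (Set.range (cellBasis n hL)))
      (x : EuclideanSpace ℝ (Fin n)),
      (fun x => f (x + z)) (g +ᵥ x) = (fun x => f (x + z)) x := by
    intro g x
    have : ((g : EuclideanSpace ℝ (Fin n)) + x) + z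
        = (g : EuclideanSpace ℝ (Fin n)) + (x + z) := add_assoc _ _ _
    show f (((g : EuclideanSpace ℝ (Fin n)) + x) + z) = f (x + z)
    rw [this]
    exact hinv g (x + z)
  have i1 : MeasurableVAdd (Submodule.span ℤ (Set.range (cellBasis n hL)))
      (EuclideanSpace ℝ (Fin n)) :=
    (inferInstance : MeasurableVAdd
      (Submodule.span ℤ (Set.range (cellBasis n hL))).toAddSubgroup (EuclideanSpace ℝ (Fin n)))
  have i2 : VAddInvariantMeasure (Submodule.span ℤ (Set.range (cellBasis n hL)))
      (EuclideanSpace ℝ (Fin n)) volume :=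
    (inferInstance : VAddInvariantMeasure
      (Submodule.span ℤ (Set.range (cellBasis n hL))).toAddSubgroup (EuclideanSpace ℝ (Fin n))
      volume)
  calc ∫ x in ZSpan.fundamentalDomain (cellBasis n hL), f (x + z)
      = ∫ x in (fun x : EuclideanSpace ℝ (Fin n) => x + z) ⁻¹'
          ZSpan.fundamentalDomain (cellBasis n hL), f (x + z) :=
        h1.setIntegral_eq h2 hinv2
    _ = ∫ x in ZSpan.fundamentalDomain (cellBasis n hL), f x :=
        (measurePreserving_add_right volume z).setIntegral_preimage_emb
          (MeasurableEquiv.addRight z).measurableEmbedding f _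


lemma aesm_min_one {f : EuclideanSpace ℝ (Fin n) → ℝ}
    (hf : AEStronglyMeasurable f volume) :
    AEStronglyMeasurable (fun y => min (f y) 1) volume := by
  have := hf.inf (aestronglyMeasurable_const (b := (1 : ℝ)))
  exact this

lemma vol_ball_scale {a b : ℝ} (ha : 0 < a) (hb : 0 < b) :
    (volume (ball (0 : EuclideanSpace ℝ (Fin n)) b)).toReal
      = (b / a) ^ n * (volume (ball (0 : EuclideanSpace ℝ (Fin n)) a)).toReal := by
  have hba : 0 < b / a := div_pos hb ha
  have h : (b / a) • ball (0 : EuclideanSpace ℝ (Fin n)) a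
      = ball (0 : EuclideanSpace ℝ (Fin n)) b := by
    rw [_root_.smul_ball hba.ne', smul_zero, Real.norm_of_nonneg hba.le]
    congr 1
    field_simp
  rw [← h, Measure.addHaar_smul_of_nonneg volume hba.le, ENNReal.toReal_mul,
    finrank_euclideanSpace_fin, ENNReal.toReal_ofReal (by positivity)]

lemma cell_integral_ballAvg {L : ℝ} (hL : L ≠ 0) {f : EuclideanSpace ℝ (Fin n) → ℝ} {C : ℝ}
    (hmeas : AEStronglyMeasurable f volume) (hbd : ∀ y, |f y| ≤ C)
    (hper : ∀ (k : Fin n → ℤ) (x : EuclideanSpace ℝ (Fin n)),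
      f (x + (EuclideanSpace.equiv (Fin n) ℝ).symm (fun i => L * (k i : ℝ))) = f x)
    {s : ℝ} (hs : 0 < s) :
    ∫ x in ZSpan.fundamentalDomain (cellBasis n hL), ballAvg f s x
      = ∫ x in ZSpan.fundamentalDomain (cellBasis n hL), f x := by
  set F := ZSpan.fundamentalDomain (cellBasis n hL) with hF
  set B := ball (0 : EuclideanSpace ℝ (Fin n)) s with hB
  set c := (volume B).toReal with hc
  have hcpos : 0 < c := ENNReal.toReal_pos (measure_ball_pos _ _ hs).ne' measure_ball_lt_top.ne
  have hFfin : volume F < ⊤ :=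
    (ZSpan.fundamentalDomain_isBounded (cellBasis n hL)).measure_lt_top
  have hFinM : IsFiniteMeasure (volume.restrict F) :=
    ⟨by rwa [Measure.restrict_apply_univ]⟩
  have hBinM : IsFiniteMeasure (volume.restrict B) :=
    ⟨by rw [Measure.restrict_apply_univ]; exact measure_ball_lt_top⟩
  have haesm : AEStronglyMeasurable
      (fun p : EuclideanSpace ℝ (Fin n) × EuclideanSpace ℝ (Fin n) => f (p.1 + p.2))
      ((volume.restrict F).prod (volume.restrict B)) := by
    rw [Measure.prod_restrict]
    refine AEStronglyMeasurable.restrict ?_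
    have hT : MeasurePreserving
        (fun p : EuclideanSpace ℝ (Fin n) × EuclideanSpace ℝ (Fin n) => (p.1, p.1 + p.2))
        (volume.prod volume) (volume.prod volume) := measurePreserving_prod_add volume volume
    have := (hmeas.comp_snd (μ := (volume : Measure (EuclideanSpace ℝ (Fin n))))
      ).comp_quasiMeasurePreserving hT.quasiMeasurePreserving
    exact this
  have hint : Integrable
      (fun p : EuclideanSpace ℝ (Fin n) × EuclideanSpace ℝ (Fin n) => f (p.1 + p.2))
      ((volume.restrict F).prod (volume.restrict B)) := by
    refine Integrable.mono' (integrable_const C) haesm ?_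
    filter_upwards with p
    rw [Real.norm_eq_abs]
    exact hbd _
  calc ∫ x in F, ballAvg f s x
      = ∫ x in F, c⁻¹ * ∫ z in B, f (x + z) := by
        refine integral_congr_ae (Filter.Eventually.of_forall fun x => ?_)
        rw [ballAvg_eq, integral_ball_center_shift]
    _ = c⁻¹ * ∫ x in F, ∫ z in B, f (x + z) := integral_const_mul _ _
    _ = c⁻¹ * ∫ z in B, ∫ x in F, f (x + z) := by
        rw [integral_integral_swap hint]
    _ = c⁻¹ * ∫ z in B, ∫ x in F, f x := by
        congr 1
        refine integral_congr_ae (Filter.Eventually.of_forall fun z => ?_)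
        exact cell_integral_translate hL hper z
    _ = c⁻¹ * (c • ∫ x in F, f x) := by rw [setIntegral_const]; rfl
    _ = ∫ x in F, f x := by
        rw [smul_eq_mul, ← mul_assoc, inv_mul_cancel₀ hcpos.ne', one_mul]

lemma coord_zero_null (i : Fin n) :
    volume {x : EuclideanSpace ℝ (Fin n) | x i = 0} = 0 := by
  set l : EuclideanSpace ℝ (Fin n) →ₗ[ℝ] ℝ :=
    (LinearMap.proj i).comp (EuclideanSpace.equiv (Fin n) ℝ).toLinearEquiv.toLinearMap with hl
  have hker : {x : EuclideanSpace ℝ (Fin n) | x i = 0} = (LinearMap.ker l : Set _) := by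
    ext x
    simp [hl, LinearMap.mem_ker]
  rw [hker]
  refine Measure.addHaar_submodule volume _ ?_
  intro hTop
  have h1 : (EuclideanSpace.single i (1 : ℝ) : EuclideanSpace ℝ (Fin n)) ∈ LinearMap.ker l := by
    rw [hTop]; trivial
  rw [LinearMap.mem_ker] at h1
  have : l (EuclideanSpace.single i (1 : ℝ)) = 1 := by
    simp [hl]
  rw [this] at h1
  exact one_ne_zero h1

lemma cell_ae_eq {L : ℝ} (hL : 0 < L) :
    ({x : EuclideanSpace ℝ (Fin n) | ∀ i, x i ∈ Ioo (0 : ℝ) L} : Set _)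
      =ᵐ[volume] ZSpan.fundamentalDomain (cellBasis n hL.ne') := by
  rw [MeasureTheory.ae_eq_set]
  constructor
  · have : {x : EuclideanSpace ℝ (Fin n) | ∀ i, x i ∈ Ioo (0 : ℝ) L}
        \ ZSpan.fundamentalDomain (cellBasis n hL.ne') = ∅ := by
      rw [diff_eq_empty]
      intro x hx
      rw [mem_cell_iff hL]
      intro i
      exact ⟨(hx i).1.le, (hx i).2⟩
    rw [this]; exact measure_empty
  · refine measure_mono_null (fun x hx => ?_)
      (measure_iUnion_null fun i => coord_zero_null i)
    obtain ⟨hx1, hx2⟩ := hx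
    rw [mem_cell_iff hL] at hx1
    simp only [mem_setOf_eq, not_forall] at hx2
    obtain ⟨i, hi⟩ := hx2
    rw [mem_Ioo, not_and_or] at hi
    refine mem_iUnion.2 ⟨i, ?_⟩
    have h1 := hx1 i
    rcases hi with h | h
    · have : x i = 0 := le_antisymm (not_lt.1 h) h1.1
      simpa using this
    · exact absurd h1.2 (by simpa using h)

end StmtAux
/-- Truncation-mollification lemma: periodicity, `ψ ≥ χ_ℓ`, `sup ψ ≤ M`, and the
`L¹` bound on the periodicity cell. -/
theorem stmt2 (n : ℕ) (L ℓ r M : ℝ) (hL : 0 < L) (hℓ : 0 < ℓ) (hℓr : ℓ ≤ r) (hM : 0 < M)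
    (χ : EuclideanSpace ℝ (Fin n) → ℝ)
    (hloc : LocallyIntegrable χ volume)
    (hnn : ∀ x, 0 ≤ χ x) (hbd : ∀ x, χ x ≤ M)
    (hper : ∀ (k : Fin n → ℤ) (x : EuclideanSpace ℝ (Fin n)),
      χ (x + (EuclideanSpace.equiv (Fin n) ℝ).symm (fun i => L * (k i : ℝ))) = χ x) :
    (∀ (k : Fin n → ℤ) (x : EuclideanSpace ℝ (Fin n)),
      psiFn χ ℓ r M (x + (EuclideanSpace.equiv (Fin n) ℝ).symm (fun i => L * (k i : ℝ)))
        = psiFn χ ℓ r M x) ∧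
    (∀ x, ballAvg χ ℓ x ≤ psiFn χ ℓ r M x) ∧
    (∀ x, psiFn χ ℓ r M x ≤ M) ∧
    (∫ x in {x : EuclideanSpace ℝ (Fin n) | ∀ i, x i ∈ Ioo (0:ℝ) L}, psiFn χ ℓ r M x)
      ≤ (2 * r / ℓ) ^ n *
        ∫ x in {x : EuclideanSpace ℝ (Fin n) | ∀ i, x i ∈ Ioo (0:ℝ) L}, χ x := by
  have hr : 0 < r := lt_of_lt_of_le hℓ hℓr
  have h2r : 0 < 2 * r := by linarith
  set K : ℝ := (2 * r / ℓ) ^ n with hK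
  have hKpos : 0 < K := by positivity
  set A : EuclideanSpace ℝ (Fin n) → ℝ := ballAvg (fun z => χ z / M) (2 * r) with hA
  set G : EuclideanSpace ℝ (Fin n) → ℝ := ballAvg χ (2 * r) with hG
  set W : EuclideanSpace ℝ (Fin n) → ℝ := fun y => min (K * A y) 1 * M with hW
  have hpsi : psiFn χ ℓ r M = ballAvg W r := rfl
  have hχm : AEStronglyMeasurable χ volume := hloc.aestronglyMeasurable
  have hχabs : ∀ y, |χ y| ≤ M := fun y => by
    rw [abs_of_nonneg (hnn y)]; exact hbd y
  have hχint : ∀ (x : EuclideanSpace ℝ (Fin n)) (s : ℝ), IntegrableOn χ (ball x s) volume :=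
    fun x s => StmtAux.integrableOn_of_bdd measure_ball_lt_top.ne hχm hχabs
  have hdm : AEStronglyMeasurable (fun z => χ z / M) volume := by
    simpa [div_eq_mul_inv] using hχm.mul_const M⁻¹
  have hdabs : ∀ y, |χ y / M| ≤ 1 := fun y => by
    rw [abs_div, abs_of_nonneg hM.le]
    exact div_le_one_of_le₀ (hχabs y) hM.le
  have hdint : ∀ (x : EuclideanSpace ℝ (Fin n)) (s : ℝ),
      IntegrableOn (fun z => χ z / M) (ball x s) volume :=
    fun x s => StmtAux.integrableOn_of_bdd measure_ball_lt_top.ne hdm hdabs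
  have hAm : AEStronglyMeasurable A volume := StmtAux.aesm_ballAvg hdm _
  have hA0 : ∀ y, 0 ≤ A y := fun y =>
    StmtAux.le_ballAvg h2r y (hdint y _) (fun z => div_nonneg (hnn z) hM.le)
  have hAG : ∀ y, A y = M⁻¹ * G y := fun y => by
    rw [hA, hG, show (fun z => χ z / M) = fun z => M⁻¹ * χ z from
      funext fun z => div_eq_inv_mul _ _, StmtAux.ballAvg_const_mul]
  have hW0 : ∀ y, 0 ≤ W y := fun y =>
    mul_nonneg (le_min (mul_nonneg hKpos.le (hA0 y)) zero_le_one) hM.le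
  have hWM : ∀ y, W y ≤ M := fun y => by
    calc W y ≤ 1 * M := mul_le_mul_of_nonneg_right (min_le_right _ _) hM.le
    _ = M := one_mul M
  have hWabs : ∀ y, |W y| ≤ M := fun y => abs_le.2 ⟨by linarith [hW0 y], hWM y⟩
  have hWm : AEStronglyMeasurable W volume :=
    (StmtAux.aesm_min_one (hAm.const_mul K)).mul_const M
  have hWint : ∀ (x : EuclideanSpace ℝ (Fin n)) (s : ℝ), IntegrableOn W (ball x s) volume :=
    fun x s => StmtAux.integrableOn_of_bdd measure_ball_lt_top.ne hWm hWabs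
  have hAper : ∀ (k : Fin n → ℤ) (y : EuclideanSpace ℝ (Fin n)),
      A (y + (EuclideanSpace.equiv (Fin n) ℝ).symm (fun i => L * (k i : ℝ))) = A y := by
    intro k y
    rw [hA, StmtAux.ballAvg_add]
    congr 1
    funext z
    rw [hper k z]
  have hGper : ∀ (k : Fin n → ℤ) (y : EuclideanSpace ℝ (Fin n)),
      G (y + (EuclideanSpace.equiv (Fin n) ℝ).symm (fun i => L * (k i : ℝ))) = G y := by
    intro k y
    rw [hG, StmtAux.ballAvg_add]
    congr 1
    funext z
    rw [hper k z]
  have hWper : ∀ (k : Fin n → ℤ) (y : EuclideanSpace ℝ (Fin n)),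
      W (y + (EuclideanSpace.equiv (Fin n) ℝ).symm (fun i => L * (k i : ℝ))) = W y := by
    intro k y
    rw [hW]
    simp only
    rw [hAper k y]
  refine ⟨?_, ?_, ?_, ?_⟩
  · -- periodicity
    intro k x
    rw [hpsi, StmtAux.ballAvg_add]
    congr 1
    funext y
    exact hWper k y
  · -- lower bound by χ_ℓ
    intro x
    rw [hpsi]
    have haM : ballAvg χ ℓ x ≤ M := StmtAux.ballAvg_le hℓ x (hχint x ℓ) hbd
    have key : ∀ y ∈ ball x r, ballAvg χ ℓ x ≤ W y := by
      intro y hy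
      have hxy : dist x y < r := by rw [dist_comm]; exact mem_ball.1 hy
      have hsub : ball x ℓ ⊆ ball y (2 * r) := by
        intro z hz
        rw [mem_ball] at hz ⊢
        calc dist z y ≤ dist z x + dist x y := dist_triangle _ _ _
          _ < ℓ + r := add_lt_add hz hxy
          _ ≤ 2 * r := by linarith
      have hmono : ∫ z in ball x ℓ, χ z ≤ ∫ z in ball y (2 * r), χ z :=
        setIntegral_mono_set (hχint y (2 * r))
          (Filter.Eventually.of_forall hnn) (HasSubset.Subset.eventuallyLE hsub)
      have hclpos : 0 < (volume (ball (0 : EuclideanSpace ℝ (Fin n)) ℓ)).toReal :=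
        ENNReal.toReal_pos (measure_ball_pos _ _ hℓ).ne' measure_ball_lt_top.ne
      have h1 : ballAvg χ ℓ x ≤ K * G y := by
        rw [hG, StmtAux.ballAvg_eq, StmtAux.ballAvg_eq,
          StmtAux.vol_ball_scale hℓ h2r, ← hK]
        rw [show K * (((K * (volume (ball (0 : EuclideanSpace ℝ (Fin n)) ℓ)).toReal))⁻¹
            * ∫ z in ball y (2 * r), χ z)
          = (volume (ball (0 : EuclideanSpace ℝ (Fin n)) ℓ)).toReal⁻¹
            * ∫ z in ball y (2 * r), χ z from by
            rw [mul_inv]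
            field_simp]
        exact mul_le_mul_of_nonneg_left hmono (by positivity)
      have h2 : ballAvg χ ℓ x ≤ K * A y * M := by
        rw [hAG y, show K * (M⁻¹ * G y) * M = K * G y from by field_simp]
        exact h1
      rw [hW]
      simp only
      rw [min_mul_of_nonneg _ _ hM.le, one_mul]
      exact le_min h2 haM
    calc ballAvg χ ℓ x
        = ballAvg (fun _ => ballAvg χ ℓ x) r x := (StmtAux.ballAvg_const hr _ x).symm
      _ ≤ ballAvg W r x := StmtAux.ballAvg_mono x
          (integrableOn_const measure_ball_lt_top.ne) (hWint x r) key
  · -- upper bound by M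
    intro x
    rw [hpsi]
    exact StmtAux.ballAvg_le hr x (hWint x r) hWM
  · -- integral bound
    have hcell := StmtAux.cell_ae_eq (n := n) hL
    rw [hpsi, setIntegral_congr_set hcell, setIntegral_congr_set (f := χ) hcell]
    have hFmble := ZSpan.fundamentalDomain_measurableSet (StmtAux.cellBasis n hL.ne')
    have hFfin : volume (ZSpan.fundamentalDomain (StmtAux.cellBasis n hL.ne')) ≠ ⊤ :=
      (ZSpan.fundamentalDomain_isBounded _).measure_lt_top.ne
    have hGm : AEStronglyMeasurable G volume := StmtAux.aesm_ballAvg hχm _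
    have hG0 : ∀ y, 0 ≤ G y := fun y => StmtAux.le_ballAvg h2r y (hχint y _) hnn
    have hGM : ∀ y, G y ≤ M := fun y => StmtAux.ballAvg_le h2r y (hχint y _) hbd
    have hGabs : ∀ y, |G y| ≤ M := fun y => abs_le.2 ⟨by linarith [hG0 y], hGM y⟩
    have hKGint : ∀ (x : EuclideanSpace ℝ (Fin n)) (s : ℝ),
        IntegrableOn (fun y => K * G y) (ball x s) volume := fun x s =>
      (StmtAux.integrableOn_of_bdd measure_ball_lt_top.ne hGm hGabs).const_mul K
    have hWleKG : ∀ y, W y ≤ K * G y := fun y => by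
      rw [hW]
      simp only
      calc min (K * A y) 1 * M ≤ (K * A y) * M :=
          mul_le_mul_of_nonneg_right (min_le_left _ _) hM.le
        _ = K * G y := by rw [hAG y]; field_simp
    have step1 : ∫ x in ZSpan.fundamentalDomain (StmtAux.cellBasis n hL.ne'),
        ballAvg W r x ≤ ∫ x in ZSpan.fundamentalDomain (StmtAux.cellBasis n hL.ne'),
        K * ballAvg G r x := by
      refine setIntegral_mono_on ?_ ?_ hFmble ?_
      · refine StmtAux.integrableOn_of_bdd hFfin (StmtAux.aesm_ballAvg hWm r) (C := M) ?_
        intro y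
        refine abs_le.2 ⟨?_, StmtAux.ballAvg_le hr y (hWint y r) hWM⟩
        have := StmtAux.le_ballAvg hr y (hWint y r) hW0
        linarith
      · refine ((StmtAux.integrableOn_of_bdd hFfin (StmtAux.aesm_ballAvg hGm r)
          (C := M) ?_).const_mul K)
        intro y
        have hGint : IntegrableOn G (ball y r) volume :=
          StmtAux.integrableOn_of_bdd measure_ball_lt_top.ne hGm hGabs
        refine abs_le.2 ⟨?_, StmtAux.ballAvg_le hr y hGint hGM⟩
        have := StmtAux.le_ballAvg hr y hGint hG0
        linarith
      · intro x _
        rw [← StmtAux.ballAvg_const_mul]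
        exact StmtAux.ballAvg_mono x (hWint x r) (hKGint x r) (fun y _ => hWleKG y)
    have step3 : ∫ x in ZSpan.fundamentalDomain (StmtAux.cellBasis n hL.ne'),
        ballAvg G r x = ∫ x in ZSpan.fundamentalDomain (StmtAux.cellBasis n hL.ne'), G x :=
      StmtAux.cell_integral_ballAvg hL.ne' hGm hGabs hGper hr
    have step4 : ∫ x in ZSpan.fundamentalDomain (StmtAux.cellBasis n hL.ne'),
        G x = ∫ x in ZSpan.fundamentalDomain (StmtAux.cellBasis n hL.ne'), χ x := by
      rw [hG]
      exact StmtAux.cell_integral_ballAvg hL.ne' hχm hχabs hper h2r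
    calc ∫ x in ZSpan.fundamentalDomain (StmtAux.cellBasis n hL.ne'), ballAvg W r x
        ≤ ∫ x in ZSpan.fundamentalDomain (StmtAux.cellBasis n hL.ne'),
            K * ballAvg G r x := step1
      _ = K * ∫ x in ZSpan.fundamentalDomain (StmtAux.cellBasis n hL.ne'),
            ballAvg G r x := integral_const_mul _ _
      _ = K * ∫ x in ZSpan.fundamentalDomain (StmtAux.cellBasis n hL.ne'), χ x := by
          rw [step3, step4]
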